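/- The Gaussian curvature of the surface of osculating circles at a regular point (s,u) is K = τ(r²τ³ cos u + r'²τ(cos u - 1) + r(τr'' - r'τ'))/((cos u - 1)(r²τ² + r'²)²). -/

import Mathlib

open Real

noncomputable section

/-- Euclidean dot product on ℝ³. -/
def dot3 (a b : Fin 3 → ℝ) : ℝ := a 0 * b 0 + a 1 * b 1 + a 2 * b 2

/-- Cross product on ℝ³. -/
def cross3 (a b : Fin 3 → ℝ) : Fin 3 → ℝ :=
  ![a 1 * b 2 - a 2 * b 1, a 2 * b 0 - a 0 * b 2, a 0 * b 1 - a 1 * b 0]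

/-- Euclidean norm on ℝ³. -/
def norm3 (a : Fin 3 → ℝ) : ℝ := Real.sqrt (dot3 a a)

/-- Scalar triple product: determinant of the three vectors. -/
def det3 (a b c : Fin 3 → ℝ) : ℝ := dot3 a (cross3 b c)


theorem sq_pos' (x : ℝ) (hx : x ≠ 0) : 0 < x ^ 2 :=
  lt_of_le_of_ne (sq_nonneg x) (Ne.symm (pow_ne_zero 2 hx))

section Frame
variable {t n b : Fin 3 → ℝ}

theorem crossNB (h1 : dot3 t t = 1) (h2 : dot3 n n = 1)
    (h3 : dot3 t n = 0) (hb : b = cross3 t n) : cross3 n b = t := by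
  subst hb
  simp only [dot3] at h2 h3
  funext i
  fin_cases i
  · simp [cross3]; linear_combination (t 0) * h2 - (n 0) * h3
  · simp [cross3]; linear_combination (t 1) * h2 - (n 1) * h3
  · simp [cross3]; linear_combination (t 2) * h2 - (n 2) * h3

theorem crossBT (h1 : dot3 t t = 1) (h2 : dot3 n n = 1)
    (h3 : dot3 t n = 0) (hb : b = cross3 t n) : cross3 b t = n := by
  subst hb
  simp only [dot3] at h1 h3
  funext i
  fin_cases i
  · simp [cross3]; linear_combination (n 0) * h1 - (t 0) * h3
  · simp [cross3]; linear_combination (n 1) * h1 - (t 1) * h3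
  · simp [cross3]; linear_combination (n 2) * h1 - (t 2) * h3

theorem dotTB (h3 : dot3 t n = 0) (hb : b = cross3 t n) : dot3 t b = 0 := by
  subst hb; simp [dot3, cross3]; ring

theorem dotNB (hb : b = cross3 t n) : dot3 n b = 0 := by
  subst hb; simp [dot3, cross3]; ring

theorem dotBB (h1 : dot3 t t = 1) (h2 : dot3 n n = 1)
    (h3 : dot3 t n = 0) (hb : b = cross3 t n) : dot3 b b = 1 := by
  subst hb
  simp only [dot3, cross3] at h1 h2 h3 ⊢
  simp only [Matrix.cons_val_zero, Matrix.cons_val_one, Matrix.head_cons,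
    Matrix.cons_val_two, Matrix.tail_cons] at *
  linear_combination (n 0 * n 0 + n 1 * n 1 + n 2 * n 2) * h1 + h2
    - (t 0 * n 0 + t 1 * n 1 + t 2 * n 2) * h3

theorem dot_expand (t n b : Fin 3 → ℝ) (a1 a2 a3 c1 c2 c3 : ℝ) :
    dot3 (a1 • t + a2 • n + a3 • b) (c1 • t + c2 • n + c3 • b) =
      a1*c1 * dot3 t t + (a1*c2 + a2*c1) * dot3 t n + (a1*c3 + a3*c1) * dot3 t b
      + a2*c2 * dot3 n n + (a2*c3 + a3*c2) * dot3 n b + a3*c3 * dot3 b b := by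
  simp [dot3]; ring

theorem dot_frame (h1 : dot3 t t = 1) (h2 : dot3 n n = 1)
    (h3 : dot3 t n = 0) (hb : b = cross3 t n) (a1 a2 a3 c1 c2 c3 : ℝ) :
    dot3 (a1 • t + a2 • n + a3 • b) (c1 • t + c2 • n + c3 • b) =
      a1*c1 + a2*c2 + a3*c3 := by
  rw [dot_expand, h1, h2, h3, dotTB h3 hb, dotNB hb, dotBB h1 h2 h3 hb]; ring

theorem cross_expand (t n b : Fin 3 → ℝ) (c1 c2 c3 d1 d2 d3 : ℝ) :
    cross3 (c1 • t + c2 • n + c3 • b) (d1 • t + d2 • n + d3 • b) =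
      (c1*d2 - c2*d1) • cross3 t n + (c2*d3 - c3*d2) • cross3 n b
      + (c3*d1 - c1*d3) • cross3 b t := by
  funext i
  fin_cases i <;> (simp [cross3]; ring)

theorem cross_frame (h1 : dot3 t t = 1) (h2 : dot3 n n = 1)
    (h3 : dot3 t n = 0) (hb : b = cross3 t n) (c1 c2 c3 d1 d2 d3 : ℝ) :
    cross3 (c1 • t + c2 • n + c3 • b) (d1 • t + d2 • n + d3 • b) =
      (c2*d3 - c3*d2) • t + (c3*d1 - c1*d3) • n + (c1*d2 - c2*d1) • b := by
  rw [cross_expand, ← hb, crossNB h1 h2 h3 hb, crossBT h1 h2 h3 hb]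
  module

theorem det_frame (h1 : dot3 t t = 1) (h2 : dot3 n n = 1)
    (h3 : dot3 t n = 0) (hb : b = cross3 t n) (a1 a2 a3 c1 c2 c3 d1 d2 d3 : ℝ) :
    dot3 (a1 • t + a2 • n + a3 • b)
      (cross3 (c1 • t + c2 • n + c3 • b) (d1 • t + d2 • n + d3 • b)) =
      a1*(c2*d3 - c3*d2) + a2*(c3*d1 - c1*d3) + a3*(c1*d2 - c2*d1) := by
  rw [cross_frame h1 h2 h3 hb, dot_frame h1 h2 h3 hb]

end Frame

/-- The Gaussian curvature `K = (eg - f²)/(EG - F²)` of the surface of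
osculating circles at a regular point `(s, u)`. -/
theorem stmt_10
    (α T N B : ℝ → Fin 3 → ℝ) (κ τ r r' : ℝ → ℝ)
    (hκ : ∀ s, 0 < κ s)
    (hr : ∀ s, r s = (κ s)⁻¹)
    -- Frenet frame and Frenet equations
    (hTT : ∀ s, dot3 (T s) (T s) = 1)
    (hNN : ∀ s, dot3 (N s) (N s) = 1)
    (hTN : ∀ s, dot3 (T s) (N s) = 0)
    (hB : ∀ s, B s = cross3 (T s) (N s))
    (hα : ∀ s, HasDerivAt α (T s) s)
    (hT : ∀ s, HasDerivAt T (κ s • N s) s)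
    (hN : ∀ s, HasDerivAt N ((-κ s) • T s + τ s • B s) s)
    (hB' : ∀ s, HasDerivAt B ((-τ s) • N s) s)
    (hr' : ∀ s, HasDerivAt r (r' s) s)
    -- the surface of osculating circles and its partial derivatives
    (X Xs Xu : ℝ → ℝ → Fin 3 → ℝ)
    (hX : ∀ s u, X s u = α s + r s • (Real.sin u • T s + (1 - Real.cos u) • N s))
    (hXs : ∀ s u, HasDerivAt (fun t => X t u) (Xs s u) s)
    (hXu : ∀ s u, HasDerivAt (fun w => X s w) (Xu s u) u)
    (τ' r'' : ℝ → ℝ)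
    (hτ' : ∀ s, HasDerivAt τ (τ' s) s)
    (hr'' : ∀ s, HasDerivAt r' (r'' s) s)
    (Xss Xsu Xuu : ℝ → ℝ → Fin 3 → ℝ)
    (hXss : ∀ s u, HasDerivAt (fun t => Xs t u) (Xss s u) s)
    (hXsu : ∀ s u, HasDerivAt (fun w => Xs s w) (Xsu s u) u)
    (hXuu : ∀ s u, HasDerivAt (fun w => Xu s w) (Xuu s u) u)
    (s u : ℝ) (hu : Real.cos u ≠ 1) (hreg : ¬(r' s = 0 ∧ τ s = 0))
    (𝒩 : Fin 3 → ℝ)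
    (h𝒩 : 𝒩 = (norm3 (cross3 (Xs s u) (Xu s u)))⁻¹ • cross3 (Xs s u) (Xu s u))
    (EE FF GG ee ff gg : ℝ)
    (hE : EE = dot3 (Xs s u) (Xs s u)) (hF : FF = dot3 (Xs s u) (Xu s u))
    (hG : GG = dot3 (Xu s u) (Xu s u))
    (he : ee = dot3 (Xss s u) 𝒩) (hf : ff = dot3 (Xsu s u) 𝒩)
    (hg : gg = dot3 (Xuu s u) 𝒩) :
    (ee * gg - ff ^ 2) / (EE * GG - FF ^ 2) =
      τ s * ((r s) ^ 2 * (τ s) ^ 3 * Real.cos u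
          + (r' s) ^ 2 * τ s * (Real.cos u - 1)
          + r s * (τ s * r'' s - r' s * τ' s))
        / ((Real.cos u - 1) * ((r s) ^ 2 * (τ s) ^ 2 + (r' s) ^ 2) ^ 2) := by
  
  -- basic scalar facts
  have hrκ : ∀ y, r y * κ y = 1 := fun y => by
    rw [hr y]; exact inv_mul_cancel₀ (ne_of_gt (hκ y))
  have hrs : r s ≠ 0 := by rw [hr s]; exact inv_ne_zero (ne_of_gt (hκ s))
  have hcu' : (1 : ℝ) - Real.cos u ≠ 0 := sub_ne_zero.mpr (Ne.symm hu)
  have hcu : Real.cos u - 1 ≠ 0 := sub_ne_zero.mpr hu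
  have hreg' : 0 < (r s) ^ 2 * (τ s) ^ 2 + (r' s) ^ 2 := by
    rcases not_and_or.mp hreg with h | h
    · have h2 : 0 < (r' s) ^ 2 := sq_pos' _ h
      nlinarith [sq_nonneg (r s * τ s)]
    · have h2 : 0 < (τ s) ^ 2 := sq_pos' _ h
      have h3 : 0 < (r s) ^ 2 := sq_pos' _ hrs
      nlinarith [sq_nonneg (r' s)]
  have hTTs := hTT s
  have hNNs := hNN s
  have hTNs := hTN s
  have hBs := hB s
  -- formula for Xs
  have hXsF : ∀ y w, Xs y w =
      (Real.cos w + r' y * Real.sin w) • T y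
      + (Real.sin w + r' y * (1 - Real.cos w)) • N y
      + ((1 - Real.cos w) * (r y * τ y)) • B y := by
    intro y w
    have hfun : (fun z => X z w)
        = fun z => α z + r z • (Real.sin w • T z + (1 - Real.cos w) • N z) :=
      funext fun z => hX z w
    have hg : HasDerivAt (fun z => Real.sin w • T z + (1 - Real.cos w) • N z)
        (Real.sin w • (κ y • N y) + (1 - Real.cos w) • ((-κ y) • T y + τ y • B y)) y :=
      ((hT y).fun_const_smul _).fun_add ((hN y).fun_const_smul _)
    have hd : HasDerivAt (fun z => α z + r z • (Real.sin w • T z + (1 - Real.cos w) • N z))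
        (T y + (r y • (Real.sin w • (κ y • N y) + (1 - Real.cos w) • ((-κ y) • T y + τ y • B y))
          + r' y • (Real.sin w • T y + (1 - Real.cos w) • N y))) y :=
      (hα y).add ((hr' y).smul hg)
    rw [← hfun] at hd
    have heq := (hXs y w).unique hd
    rw [heq]
    funext i
    have hky := hrκ y
    simp only [Pi.add_apply, Pi.smul_apply, smul_eq_mul]
    linear_combination (Real.sin w * N y i - (1 - Real.cos w) * T y i) * hky
  -- formula for Xu
  have hsub : ∀ w : ℝ, HasDerivAt (fun z : ℝ => 1 - Real.cos z) (Real.sin w) w := by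
    intro w
    simpa using (hasDerivAt_const w (1:ℝ)).fun_sub (Real.hasDerivAt_cos w)
  have hXuF : ∀ w, Xu s w
      = (r s * Real.cos w) • T s + (r s * Real.sin w) • N s + (0:ℝ) • B s := by
    intro w
    have hfun : (fun z => X s z)
        = fun z => α s + r s • (Real.sin z • T s + (1 - Real.cos z) • N s) :=
      funext fun z => hX s z
    have hd : HasDerivAt (fun z => α s + r s • (Real.sin z • T s + (1 - Real.cos z) • N s))
        (0 + r s • (Real.cos w • T s + Real.sin w • N s)) w :=
      (hasDerivAt_const w (α s)).add
        ((((Real.hasDerivAt_sin w).smul_const (T s)).add ((hsub w).smul_const (N s))).const_smul (r s))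
    rw [← hfun] at hd
    have heq := (hXu s w).unique hd
    rw [heq]
    funext i
    simp only [Pi.add_apply, Pi.smul_apply, Pi.zero_apply, smul_eq_mul]
    ring
  -- formula for Xuu
  have hXuuF : Xuu s u
      = (-(r s * Real.sin u)) • T s + (r s * Real.cos u) • N s + (0:ℝ) • B s := by
    have hfun : (fun z => Xu s z)
        = fun z => (r s * Real.cos z) • T s + (r s * Real.sin z) • N s + (0:ℝ) • B s :=
      funext hXuF
    have hd : HasDerivAt
        (fun z => (r s * Real.cos z) • T s + (r s * Real.sin z) • N s + (0:ℝ) • B s)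
        ((r s * -Real.sin u) • T s + (r s * Real.cos u) • N s + 0) u :=
      ((((Real.hasDerivAt_cos u).const_mul (r s)).smul_const (T s)).add
        (((Real.hasDerivAt_sin u).const_mul (r s)).smul_const (N s))).add
        (hasDerivAt_const u ((0:ℝ) • B s))
    rw [← hfun] at hd
    have heq := (hXuu s u).unique hd
    rw [heq]
    funext i
    simp only [Pi.add_apply, Pi.smul_apply, Pi.zero_apply, smul_eq_mul]
    ring
  -- formula for Xsu
  have hXsuF : Xsu s u
      = (-Real.sin u + r' s * Real.cos u) • T s + (Real.cos u + r' s * Real.sin u) • N s + (Real.sin u * (r s * τ s)) • B s := by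
    have hfun : (fun z => Xs s z)
        = fun z => (Real.cos z + r' s * Real.sin z) • T s
          + (Real.sin z + r' s * (1 - Real.cos z)) • N s
          + ((1 - Real.cos z) * (r s * τ s)) • B s :=
      funext fun z => hXsF s z
    have hd : HasDerivAt (fun z => (Real.cos z + r' s * Real.sin z) • T s
          + (Real.sin z + r' s * (1 - Real.cos z)) • N s
          + ((1 - Real.cos z) * (r s * τ s)) • B s)
        ((-Real.sin u + r' s * Real.cos u) • T s
          + (Real.cos u + r' s * Real.sin u) • N s
          + (Real.sin u * (r s * τ s)) • B s) u :=
      ((((Real.hasDerivAt_cos u).add ((Real.hasDerivAt_sin u).const_mul (r' s))).smul_const (T s)).add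
        (((Real.hasDerivAt_sin u).add ((hsub u).const_mul (r' s))).smul_const (N s))).add
        (((hsub u).mul_const (r s * τ s)).smul_const (B s))
    rw [← hfun] at hd
    exact (hXsu s u).unique hd
  -- formula for Xss
  have hXssF : Xss s u
      = (r'' s * Real.sin u - κ s * (Real.sin u + r' s * (1 - Real.cos u))) • T s + (κ s * (Real.cos u + r' s * Real.sin u) + r'' s * (1 - Real.cos u) - (1 - Real.cos u) * (r s * τ s) * τ s) • N s + (τ s * (Real.sin u + r' s * (1 - Real.cos u)) + (1 - Real.cos u) * (r' s * τ s + r s * τ' s)) • B s := by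
    have hfun : (fun z => Xs z u)
        = fun z => (Real.cos u + r' z * Real.sin u) • T z
          + (Real.sin u + r' z * (1 - Real.cos u)) • N z
          + ((1 - Real.cos u) * (r z * τ z)) • B z :=
      funext fun z => hXsF z u
    have hc1 : HasDerivAt (fun z => Real.cos u + r' z * Real.sin u) (r'' s * Real.sin u) s := by
      simpa using (hasDerivAt_const s (Real.cos u)).fun_add ((hr'' s).mul_const (Real.sin u))
    have hc2 : HasDerivAt (fun z => Real.sin u + r' z * (1 - Real.cos u))
        (r'' s * (1 - Real.cos u)) s := by
      simpa using (hasDerivAt_const s (Real.sin u)).fun_add ((hr'' s).mul_const (1 - Real.cos u))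
    have hc3 : HasDerivAt (fun z => (1 - Real.cos u) * (r z * τ z))
        ((1 - Real.cos u) * (r' s * τ s + r s * τ' s)) s :=
      ((hr' s).mul (hτ' s)).const_mul _
    have hd : HasDerivAt (fun z => (Real.cos u + r' z * Real.sin u) • T z
          + (Real.sin u + r' z * (1 - Real.cos u)) • N z
          + ((1 - Real.cos u) * (r z * τ z)) • B z)
        (((Real.cos u + r' s * Real.sin u) • (κ s • N s) + (r'' s * Real.sin u) • T s)
          + ((Real.sin u + r' s * (1 - Real.cos u)) • ((-κ s) • T s + τ s • B s)
            + (r'' s * (1 - Real.cos u)) • N s)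
          + (((1 - Real.cos u) * (r s * τ s)) • ((-τ s) • N s)
            + ((1 - Real.cos u) * (r' s * τ s + r s * τ' s)) • B s)) s :=
      ((hc1.smul (hT s)).add (hc2.smul (hN s))).add (hc3.smul (hB' s))
    rw [← hfun] at hd
    have heq := (hXss s u).unique hd
    rw [heq]
    funext i
    simp only [Pi.add_apply, Pi.smul_apply, smul_eq_mul]
    ring
  -- first fundamental form coefficients
  have hXsc := hXsF s u
  have hXuc := hXuF u
  have hEE : EE = ((Real.cos u + r' s * Real.sin u) * (Real.cos u + r' s * Real.sin u) + (Real.sin u + r' s * (1 - Real.cos u)) * (Real.sin u + r' s * (1 - Real.cos u)) + ((1 - Real.cos u) * (r s * τ s)) * ((1 - Real.cos u) * (r s * τ s))) := by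
    rw [hE, hXsc, dot_frame hTTs hNNs hTNs hBs]
  have hFF : FF = ((Real.cos u + r' s * Real.sin u) * (r s * Real.cos u) + (Real.sin u + r' s * (1 - Real.cos u)) * (r s * Real.sin u) + ((1 - Real.cos u) * (r s * τ s)) * (0:ℝ)) := by
    rw [hF, hXsc, hXuc, dot_frame hTTs hNNs hTNs hBs]
  have hGG : GG = ((r s * Real.cos u) * (r s * Real.cos u) + (r s * Real.sin u) * (r s * Real.sin u) + (0:ℝ) * (0:ℝ)) := by
    rw [hG, hXuc, dot_frame hTTs hNNs hTNs hBs]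
  have hΔ : EE * GG - FF ^ 2 = ((r s) ^ 2 * (1 - Real.cos u) ^ 2 * ((r s) ^ 2 * (τ s) ^ 2 + (r' s) ^ 2)) := by
    rw [hEE, hFF, hGG]
    linear_combination ((r s)^2*(r' s)^2 + (r s)^4*(τ s)^2 + (-2)*(Real.cos u)*(r s)^2*(r' s)^2 + (-2)*(Real.cos u)*(r s)^4*(τ s)^2 + (Real.cos u)^2*(r s)^2*(r' s)^2 + (Real.cos u)^2*(r s)^4*(τ s)^2 + (Real.sin u)^2*(r s)^2*(r' s)^2) * Real.sin_sq_add_cos_sq u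
  have hΔexprpos : (0:ℝ) < ((r s) ^ 2 * (1 - Real.cos u) ^ 2 * ((r s) ^ 2 * (τ s) ^ 2 + (r' s) ^ 2)) :=
    mul_pos (mul_pos (sq_pos' _ hrs) (sq_pos' _ hcu')) hreg'
  have hΔpos : 0 < EE * GG - FF ^ 2 := by rw [hΔ]; exact hΔexprpos
  -- the normal vector
  have hWW : dot3 (cross3 (Xs s u) (Xu s u)) (cross3 (Xs s u) (Xu s u)) = EE * GG - FF ^ 2 := by
    rw [hE, hF, hG]
    simp only [dot3, cross3, Matrix.cons_val_zero, Matrix.cons_val_one, Matrix.head_cons,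
      Matrix.cons_val_two, Matrix.tail_cons]
    ring
  have hWpos : 0 < dot3 (cross3 (Xs s u) (Xu s u)) (cross3 (Xs s u) (Xu s u)) := by
    rw [hWW]; exact hΔpos
  have hnormsq : norm3 (cross3 (Xs s u) (Xu s u)) ^ 2 = EE * GG - FF ^ 2 := by
    rw [norm3, Real.sq_sqrt (le_of_lt hWpos), hWW]
  have hnormpos : 0 < norm3 (cross3 (Xs s u) (Xu s u)) := by
    rw [norm3]; exact Real.sqrt_pos.mpr hWpos
  have hnne : norm3 (cross3 (Xs s u) (Xu s u)) ≠ 0 := ne_of_gt hnormpos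
  -- second fundamental form coefficients
  have hdotsmul : ∀ Y : Fin 3 → ℝ, ∀ x : ℝ, ∀ Z : Fin 3 → ℝ,
      dot3 Y (x • Z) = x * dot3 Y Z := by
    intro Y x Z
    simp only [dot3, Pi.smul_apply, smul_eq_mul]
    ring
  have hee : ee = (norm3 (cross3 (Xs s u) (Xu s u)))⁻¹ * ((r'' s * Real.sin u - κ s * (Real.sin u + r' s * (1 - Real.cos u))) * ((Real.sin u + r' s * (1 - Real.cos u)) * (0:ℝ) - ((1 - Real.cos u) * (r s * τ s)) * (r s * Real.sin u)) + (κ s * (Real.cos u + r' s * Real.sin u) + r'' s * (1 - Real.cos u) - (1 - Real.cos u) * (r s * τ s) * τ s) * (((1 - Real.cos u) * (r s * τ s)) * (r s * Real.cos u) - (Real.cos u + r' s * Real.sin u) * (0:ℝ)) + (τ s * (Real.sin u + r' s * (1 - Real.cos u)) + (1 - Real.cos u) * (r' s * τ s + r s * τ' s)) * ((Real.cos u + r' s * Real.sin u) * (r s * Real.sin u) - (Real.sin u + r' s * (1 - Real.cos u)) * (r s * Real.cos u))) := by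
    rw [he, h𝒩, hdotsmul, hXssF, hXsc, hXuc, det_frame hTTs hNNs hTNs hBs]
  have hff : ff = (norm3 (cross3 (Xs s u) (Xu s u)))⁻¹ * ((-Real.sin u + r' s * Real.cos u) * ((Real.sin u + r' s * (1 - Real.cos u)) * (0:ℝ) - ((1 - Real.cos u) * (r s * τ s)) * (r s * Real.sin u)) + (Real.cos u + r' s * Real.sin u) * (((1 - Real.cos u) * (r s * τ s)) * (r s * Real.cos u) - (Real.cos u + r' s * Real.sin u) * (0:ℝ)) + (Real.sin u * (r s * τ s)) * ((Real.cos u + r' s * Real.sin u) * (r s * Real.sin u) - (Real.sin u + r' s * (1 - Real.cos u)) * (r s * Real.cos u))) := by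
    rw [hf, h𝒩, hdotsmul, hXsuF, hXsc, hXuc, det_frame hTTs hNNs hTNs hBs]
  have hgg : gg = (norm3 (cross3 (Xs s u) (Xu s u)))⁻¹ * ((-(r s * Real.sin u)) * ((Real.sin u + r' s * (1 - Real.cos u)) * (0:ℝ) - ((1 - Real.cos u) * (r s * τ s)) * (r s * Real.sin u)) + (r s * Real.cos u) * (((1 - Real.cos u) * (r s * τ s)) * (r s * Real.cos u) - (Real.cos u + r' s * Real.sin u) * (0:ℝ)) + (0:ℝ) * ((Real.cos u + r' s * Real.sin u) * (r s * Real.sin u) - (Real.sin u + r' s * (1 - Real.cos u)) * (r s * Real.cos u))) := by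
    rw [hg, h𝒩, hdotsmul, hXuuF, hXsc, hXuc, det_frame hTTs hNNs hTNs hBs]
  have hnum : ee * gg - ff ^ 2 = (((r'' s * Real.sin u - κ s * (Real.sin u + r' s * (1 - Real.cos u))) * ((Real.sin u + r' s * (1 - Real.cos u)) * (0:ℝ) - ((1 - Real.cos u) * (r s * τ s)) * (r s * Real.sin u)) + (κ s * (Real.cos u + r' s * Real.sin u) + r'' s * (1 - Real.cos u) - (1 - Real.cos u) * (r s * τ s) * τ s) * (((1 - Real.cos u) * (r s * τ s)) * (r s * Real.cos u) - (Real.cos u + r' s * Real.sin u) * (0:ℝ)) + (τ s * (Real.sin u + r' s * (1 - Real.cos u)) + (1 - Real.cos u) * (r' s * τ s + r s * τ' s)) * ((Real.cos u + r' s * Real.sin u) * (r s * Real.sin u) - (Real.sin u + r' s * (1 - Real.cos u)) * (r s * Real.cos u))) * ((-(r s * Real.sin u)) * ((Real.sin u + r' s * (1 - Real.cos u)) * (0:ℝ) - ((1 - Real.cos u) * (r s * τ s)) * (r s * Real.sin u)) + (r s * Real.cos u) * (((1 - Real.cos u) * (r s * τ s)) * (r s * Real.cos u) - (Real.cos u +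 r' s * Real.sin u) * (0:ℝ)) + (0:ℝ) * ((Real.cos u + r' s * Real.sin u) * (r s * Real.sin u) - (Real.sin u + r' s * (1 - Real.cos u)) * (r s * Real.cos u))) - ((-Real.sin u + r' s * Real.cos u) * ((Real.sin u + r' s * (1 - Real.cos u)) * (0:ℝ) - ((1 - Real.cos u) * (r s * τ s)) * (r s * Real.sin u)) + (Real.cos u + r' s * Real.sin u) * (((1 - Real.cos u) * (r s * τ s)) * (r s * Real.cos u) - (Real.cos u + r' s * Real.sin u) * (0:ℝ)) + (Real.sin u * (r s * τ s)) * ((Real.cos u + r' s * Real.sin u) * (r s * Real.sin u) - (Real.sin u + r' s * (1 - Real.cos u)) * (r s * Real.cos u))) ^ 2) / (EE * GG - FF ^ 2) := by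
    rw [hee, hff, hgg, ← hnormsq]
    field_simp
  have hΔ2ne : (((r s) ^ 2 * (1 - Real.cos u) ^ 2 * ((r s) ^ 2 * (τ s) ^ 2 + (r' s) ^ 2))) * (((r s) ^ 2 * (1 - Real.cos u) ^ 2 * ((r s) ^ 2 * (τ s) ^ 2 + (r' s) ^ 2))) ≠ 0 := ne_of_gt (mul_pos hΔexprpos hΔexprpos)
  have hdenne : (Real.cos u - 1) * ((r s) ^ 2 * (τ s) ^ 2 + (r' s) ^ 2) ^ 2 ≠ 0 :=
    mul_ne_zero hcu (pow_ne_zero 2 (ne_of_gt hreg'))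
  rw [hnum, hΔ, div_div, div_eq_div_iff hΔ2ne hdenne]
  linear_combination ((r s)^4*(r' s)^4*(τ s)^2 + (-1)*(r s)^4*(r' s)^6*(τ s)^2 + (-1)*(r s)^5*(r' s)^4*(τ s)^2*(κ s) + (r s)^5*(r' s)^4*(r'' s)*(τ s)^2 + (-1)*(r s)^5*(r' s)^5*(τ s)*(τ' s) + (2)*(r s)^6*(r' s)^2*(τ s)^4 + (-2)*(r s)^6*(r' s)^4*(τ s)^4 + (-2)*(r s)^7*(r' s)^2*(τ s)^4*(κ s) + (2)*(r s)^7*(r' s)^2*(r'' s)*(τ s)^4 + (-2)*(r s)^7*(r' s)^3*(τ s)^3*(τ' s) + (r s)^8*(τ s)^6 + (-1)*(r s)^8*(r' s)^2*(τ s)^6 + (-1)*(r s)^9*(τ s)^6*(κ s) + (r s)^9*(r'' s)*(τ s)^6 + (-1)*(r s)^9*(r' s)*(τ s)^5*(τ' s) + (-3)*(Real.cos u)*(r s)^4*(r' s)^4*(τ s)^2 + (5)*(Real.cos u)*(r s)^4*(r' s)^6*(τ s)^2 + (3)*(Real.cos u)*(r s)^5*(r' s)^4*(τ s)^2*(κ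 s) + (-4)*(Real.cos u)*(r s)^5*(r' s)^4*(r'' s)*(τ s)^2 + (4)*(Real.cos u)*(r s)^5*(r' s)^5*(τ s)*(τ' s) + (-6)*(Real.cos u)*(r s)^6*(r' s)^2*(τ s)^4 + (11)*(Real.cos u)*(r s)^6*(r' s)^4*(τ s)^4 + (6)*(Real.cos u)*(r s)^7*(r' s)^2*(τ s)^4*(κ s) + (-8)*(Real.cos u)*(r s)^7*(r' s)^2*(r'' s)*(τ s)^4 + (8)*(Real.cos u)*(r s)^7*(r' s)^3*(τ s)^3*(τ' s) + (-3)*(Real.cos u)*(r s)^8*(τ s)^6 + (7)*(Real.cos u)*(r s)^8*(r' s)^2*(τ s)^6 + (3)*(Real.cos u)*(r s)^9*(τ s)^6*(κ s) + (-4)*(Real.cos u)*(r s)^9*(r'' s)*(τ s)^6 + (4)*(Real.cos u)*(r s)^9*(r' s)*(τ s)^5*(τ' s) + (Real.cos u)*(r s)^10*(τ s)^8 + (4)*(Real.cos u)^2*(r s)^4*(r' s)^4*(τ s)^2 + (-11)*(Real.cos u)^2*(r s)^4*(r' s)^6*(τ s)^2 + (-4)*(Real.cos u)^2*(r s)^5*(r'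 s)^4*(τ s)^2*(κ s) + (7)*(Real.cos u)^2*(r s)^5*(r' s)^4*(r'' s)*(τ s)^2 + (-7)*(Real.cos u)^2*(r s)^5*(r' s)^5*(τ s)*(τ' s) + (8)*(Real.cos u)^2*(r s)^6*(r' s)^2*(τ s)^4 + (-26)*(Real.cos u)^2*(r s)^6*(r' s)^4*(τ s)^4 + (-8)*(Real.cos u)^2*(r s)^7*(r' s)^2*(τ s)^4*(κ s) + (14)*(Real.cos u)^2*(r s)^7*(r' s)^2*(r'' s)*(τ s)^4 + (-14)*(Real.cos u)^2*(r s)^7*(r' s)^3*(τ s)^3*(τ' s) + (4)*(Real.cos u)^2*(r s)^8*(τ s)^6 + (-19)*(Real.cos u)^2*(r s)^8*(r' s)^2*(τ s)^6 + (-4)*(Real.cos u)^2*(r s)^9*(τ s)^6*(κ s) + (7)*(Real.cos u)^2*(r s)^9*(r'' s)*(τ s)^6 + (-7)*(Real.cos u)^2*(r s)^9*(r' s)*(τ s)^5*(τ' s) + (-4)*(Real.cos u)^2*(r s)^10*(τ s)^8 + (-4)*(Real.cos u)^3*(r s)^4*(r' s)^4*(τ s)^2 + (13)*(Real.cos u)^3*(r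 s)^4*(r' s)^6*(τ s)^2 + (4)*(Real.cos u)^3*(r s)^5*(r' s)^4*(τ s)^2*(κ s) + (-7)*(Real.cos u)^3*(r s)^5*(r' s)^4*(r'' s)*(τ s)^2 + (7)*(Real.cos u)^3*(r s)^5*(r' s)^5*(τ s)*(τ' s) + (-8)*(Real.cos u)^3*(r s)^6*(r' s)^2*(τ s)^4 + (32)*(Real.cos u)^3*(r s)^6*(r' s)^4*(τ s)^4 + (8)*(Real.cos u)^3*(r s)^7*(r' s)^2*(τ s)^4*(κ s) + (-14)*(Real.cos u)^3*(r s)^7*(r' s)^2*(r'' s)*(τ s)^4 + (14)*(Real.cos u)^3*(r s)^7*(r' s)^3*(τ s)^3*(τ' s) + (-4)*(Real.cos u)^3*(r s)^8*(τ s)^6 + (25)*(Real.cos u)^3*(r s)^8*(r' s)^2*(τ s)^6 + (4)*(Real.cos u)^3*(r s)^9*(τ s)^6*(κ s) + (-7)*(Real.cos u)^3*(r s)^9*(r'' s)*(τ s)^6 + (7)*(Real.cos u)^3*(r s)^9*(r' s)*(τ s)^5*(τ' s) + (6)*(Real.cos u)^3*(r s)^10*(τ s)^8 + (3)*(Real.cos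 u)^4*(r s)^4*(r' s)^4*(τ s)^2 + (-8)*(Real.cos u)^4*(r s)^4*(r' s)^6*(τ s)^2 + (-3)*(Real.cos u)^4*(r s)^5*(r' s)^4*(τ s)^2*(κ s) + (4)*(Real.cos u)^4*(r s)^5*(r' s)^4*(r'' s)*(τ s)^2 + (-4)*(Real.cos u)^4*(r s)^5*(r' s)^5*(τ s)*(τ' s) + (6)*(Real.cos u)^4*(r s)^6*(r' s)^2*(τ s)^4 + (-20)*(Real.cos u)^4*(r s)^6*(r' s)^4*(τ s)^4 + (-6)*(Real.cos u)^4*(r s)^7*(r' s)^2*(τ s)^4*(κ s) + (8)*(Real.cos u)^4*(r s)^7*(r' s)^2*(r'' s)*(τ s)^4 + (-8)*(Real.cos u)^4*(r s)^7*(r' s)^3*(τ s)^3*(τ' s) + (3)*(Real.cos u)^4*(r s)^8*(τ s)^6 + (-16)*(Real.cos u)^4*(r s)^8*(r' s)^2*(τ s)^6 + (-3)*(Real.cos u)^4*(r s)^9*(τ s)^6*(κ s) + (4)*(Real.cos u)^4*(r s)^9*(r'' s)*(τ s)^6 + (-4)*(Real.cos u)^4*(r s)^9*(r' s)*(τ s)^5*(τ'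 s) + (-4)*(Real.cos u)^4*(r s)^10*(τ s)^8 + (-1)*(Real.cos u)^5*(r s)^4*(r' s)^4*(τ s)^2 + (2)*(Real.cos u)^5*(r s)^4*(r' s)^6*(τ s)^2 + (Real.cos u)^5*(r s)^5*(r' s)^4*(τ s)^2*(κ s) + (-1)*(Real.cos u)^5*(r s)^5*(r' s)^4*(r'' s)*(τ s)^2 + (Real.cos u)^5*(r s)^5*(r' s)^5*(τ s)*(τ' s) + (-2)*(Real.cos u)^5*(r s)^6*(r' s)^2*(τ s)^4 + (5)*(Real.cos u)^5*(r s)^6*(r' s)^4*(τ s)^4 + (2)*(Real.cos u)^5*(r s)^7*(r' s)^2*(τ s)^4*(κ s) + (-2)*(Real.cos u)^5*(r s)^7*(r' s)^2*(r'' s)*(τ s)^4 + (2)*(Real.cos u)^5*(r s)^7*(r' s)^3*(τ s)^3*(τ' s) + (-1)*(Real.cos u)^5*(r s)^8*(τ s)^6 + (4)*(Real.cos u)^5*(r s)^8*(r' s)^2*(τ s)^6 + (Real.cos u)^5*(r s)^9*(τ s)^6*(κ s) + (-1)*(Real.cos u)^5*(r s)^9*(r'' s)*(τ s)^6 + (Real.cos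 u)^5*(r s)^9*(r' s)*(τ s)^5*(τ' s) + (Real.cos u)^5*(r s)^10*(τ s)^8 + (Real.sin u)*(r s)^4*(r' s)^5*(τ s)^2 + (-1)*(Real.sin u)*(r s)^5*(r' s)^5*(τ s)^2*(κ s) + (2)*(Real.sin u)*(r s)^6*(r' s)^3*(τ s)^4 + (-2)*(Real.sin u)*(r s)^7*(r' s)^3*(τ s)^4*(κ s) + (Real.sin u)*(r s)^8*(r' s)*(τ s)^6 + (-1)*(Real.sin u)*(r s)^9*(r' s)*(τ s)^6*(κ s) + (-3)*(Real.sin u)*(Real.cos u)*(r s)^4*(r' s)^5*(τ s)^2 + (3)*(Real.sin u)*(Real.cos u)*(r s)^5*(r' s)^5*(τ s)^2*(κ s) + (-6)*(Real.sin u)*(Real.cos u)*(r s)^6*(r' s)^3*(τ s)^4 + (6)*(Real.sin u)*(Real.cos u)*(r s)^7*(r' s)^3*(τ s)^4*(κ s) + (-3)*(Real.sin u)*(Real.cos u)*(r s)^8*(r' s)*(τ s)^6 + (3)*(Real.sin u)*(Real.cos u)*(r s)^9*(r' s)*(τ s)^6*(κ s) + (4)*(Real.sin u)*(Real.cos u)^2*(r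 s)^4*(r' s)^5*(τ s)^2 + (-3)*(Real.sin u)*(Real.cos u)^2*(r s)^5*(r' s)^5*(τ s)^2*(κ s) + (8)*(Real.sin u)*(Real.cos u)^2*(r s)^6*(r' s)^3*(τ s)^4 + (-6)*(Real.sin u)*(Real.cos u)^2*(r s)^7*(r' s)^3*(τ s)^4*(κ s) + (4)*(Real.sin u)*(Real.cos u)^2*(r s)^8*(r' s)*(τ s)^6 + (-3)*(Real.sin u)*(Real.cos u)^2*(r s)^9*(r' s)*(τ s)^6*(κ s) + (-3)*(Real.sin u)*(Real.cos u)^3*(r s)^4*(r' s)^5*(τ s)^2 + (Real.sin u)*(Real.cos u)^3*(r s)^5*(r' s)^5*(τ s)^2*(κ s) + (-6)*(Real.sin u)*(Real.cos u)^3*(r s)^6*(r' s)^3*(τ s)^4 + (2)*(Real.sin u)*(Real.cos u)^3*(r s)^7*(r' s)^3*(τ s)^4*(κ s) + (-3)*(Real.sin u)*(Real.cos u)^3*(r s)^8*(r' s)*(τ s)^6 + (Real.sin u)*(Real.cos u)^3*(r s)^9*(r' s)*(τ s)^6*(κ s) + (Real.sin u)*(Real.cos u)^4*(r s)^4*(r'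 s)^5*(τ s)^2 + (2)*(Real.sin u)*(Real.cos u)^4*(r s)^6*(r' s)^3*(τ s)^4 + (Real.sin u)*(Real.cos u)^4*(r s)^8*(r' s)*(τ s)^6 + (Real.sin u)^2*(r s)^4*(r' s)^4*(τ s)^2 + (-1)*(Real.sin u)^2*(r s)^4*(r' s)^6*(τ s)^2 + (-1)*(Real.sin u)^2*(r s)^5*(r' s)^4*(τ s)^2*(κ s) + (Real.sin u)^2*(r s)^5*(r' s)^4*(r'' s)*(τ s)^2 + (-1)*(Real.sin u)^2*(r s)^5*(r' s)^5*(τ s)*(τ' s) + (2)*(Real.sin u)^2*(r s)^6*(r' s)^2*(τ s)^4 + (-2)*(Real.sin u)^2*(r s)^6*(r' s)^4*(τ s)^4 + (-2)*(Real.sin u)^2*(r s)^7*(r' s)^2*(τ s)^4*(κ s) + (2)*(Real.sin u)^2*(r s)^7*(r' s)^2*(r'' s)*(τ s)^4 + (-2)*(Real.sin u)^2*(r s)^7*(r' s)^3*(τ s)^3*(τ' s) + (Real.sin u)^2*(r s)^8*(τ s)^6 + (-1)*(Real.sin u)^2*(r s)^8*(r' s)^2*(τ s)^6 + (-1)*(Real.sin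 u)^2*(r s)^9*(τ s)^6*(κ s) + (Real.sin u)^2*(r s)^9*(r'' s)*(τ s)^6 + (-1)*(Real.sin u)^2*(r s)^9*(r' s)*(τ s)^5*(τ' s) + (-3)*(Real.sin u)^2*(Real.cos u)*(r s)^4*(r' s)^4*(τ s)^2 + (3)*(Real.sin u)^2*(Real.cos u)*(r s)^4*(r' s)^6*(τ s)^2 + (3)*(Real.sin u)^2*(Real.cos u)*(r s)^5*(r' s)^4*(τ s)^2*(κ s) + (-3)*(Real.sin u)^2*(Real.cos u)*(r s)^5*(r' s)^4*(r'' s)*(τ s)^2 + (3)*(Real.sin u)^2*(Real.cos u)*(r s)^5*(r' s)^5*(τ s)*(τ' s) + (-6)*(Real.sin u)^2*(Real.cos u)*(r s)^6*(r' s)^2*(τ s)^4 + (6)*(Real.sin u)^2*(Real.cos u)*(r s)^6*(r' s)^4*(τ s)^4 + (6)*(Real.sin u)^2*(Real.cos u)*(r s)^7*(r' s)^2*(τ s)^4*(κ s) + (-6)*(Real.sin u)^2*(Real.cos u)*(r s)^7*(r' s)^2*(r'' s)*(τ s)^4 + (6)*(Real.sin u)^2*(Real.cos u)*(r s)^7*(r'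 s)^3*(τ s)^3*(τ' s) + (-3)*(Real.sin u)^2*(Real.cos u)*(r s)^8*(τ s)^6 + (3)*(Real.sin u)^2*(Real.cos u)*(r s)^8*(r' s)^2*(τ s)^6 + (3)*(Real.sin u)^2*(Real.cos u)*(r s)^9*(τ s)^6*(κ s) + (-3)*(Real.sin u)^2*(Real.cos u)*(r s)^9*(r'' s)*(τ s)^6 + (3)*(Real.sin u)^2*(Real.cos u)*(r s)^9*(r' s)*(τ s)^5*(τ' s) + (3)*(Real.sin u)^2*(Real.cos u)^2*(r s)^4*(r' s)^4*(τ s)^2 + (-3)*(Real.sin u)^2*(Real.cos u)^2*(r s)^4*(r' s)^6*(τ s)^2 + (-3)*(Real.sin u)^2*(Real.cos u)^2*(r s)^5*(r' s)^4*(τ s)^2*(κ s) + (3)*(Real.sin u)^2*(Real.cos u)^2*(r s)^5*(r' s)^4*(r'' s)*(τ s)^2 + (-3)*(Real.sin u)^2*(Real.cos u)^2*(r s)^5*(r' s)^5*(τ s)*(τ' s) + (6)*(Real.sin u)^2*(Real.cos u)^2*(r s)^6*(r' s)^2*(τ s)^4 + (-6)*(Real.sin u)^2*(Real.cos u)^2*(r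 s)^6*(r' s)^4*(τ s)^4 + (-6)*(Real.sin u)^2*(Real.cos u)^2*(r s)^7*(r' s)^2*(τ s)^4*(κ s) + (6)*(Real.sin u)^2*(Real.cos u)^2*(r s)^7*(r' s)^2*(r'' s)*(τ s)^4 + (-6)*(Real.sin u)^2*(Real.cos u)^2*(r s)^7*(r' s)^3*(τ s)^3*(τ' s) + (3)*(Real.sin u)^2*(Real.cos u)^2*(r s)^8*(τ s)^6 + (-3)*(Real.sin u)^2*(Real.cos u)^2*(r s)^8*(r' s)^2*(τ s)^6 + (-3)*(Real.sin u)^2*(Real.cos u)^2*(r s)^9*(τ s)^6*(κ s) + (3)*(Real.sin u)^2*(Real.cos u)^2*(r s)^9*(r'' s)*(τ s)^6 + (-3)*(Real.sin u)^2*(Real.cos u)^2*(r s)^9*(r' s)*(τ s)^5*(τ' s) + (-1)*(Real.sin u)^2*(Real.cos u)^3*(r s)^4*(r' s)^4*(τ s)^2 + (Real.sin u)^2*(Real.cos u)^3*(r s)^4*(r' s)^6*(τ s)^2 + (Real.sin u)^2*(Real.cos u)^3*(r s)^5*(r' s)^4*(τ s)^2*(κ s) + (-1)*(Real.sin u)^2*(Real.cos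 u)^3*(r s)^5*(r' s)^4*(r'' s)*(τ s)^2 + (Real.sin u)^2*(Real.cos u)^3*(r s)^5*(r' s)^5*(τ s)*(τ' s) + (-2)*(Real.sin u)^2*(Real.cos u)^3*(r s)^6*(r' s)^2*(τ s)^4 + (2)*(Real.sin u)^2*(Real.cos u)^3*(r s)^6*(r' s)^4*(τ s)^4 + (2)*(Real.sin u)^2*(Real.cos u)^3*(r s)^7*(r' s)^2*(τ s)^4*(κ s) + (-2)*(Real.sin u)^2*(Real.cos u)^3*(r s)^7*(r' s)^2*(r'' s)*(τ s)^4 + (2)*(Real.sin u)^2*(Real.cos u)^3*(r s)^7*(r' s)^3*(τ s)^3*(τ' s) + (-1)*(Real.sin u)^2*(Real.cos u)^3*(r s)^8*(τ s)^6 + (Real.sin u)^2*(Real.cos u)^3*(r s)^8*(r' s)^2*(τ s)^6 + (Real.sin u)^2*(Real.cos u)^3*(r s)^9*(τ s)^6*(κ s) + (-1)*(Real.sin u)^2*(Real.cos u)^3*(r s)^9*(r'' s)*(τ s)^6 + (Real.sin u)^2*(Real.cos u)^3*(r s)^9*(r' s)*(τ s)^5*(τ' s) + (Real.sin u)^3*(r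 s)^4*(r' s)^5*(τ s)^2 + (2)*(Real.sin u)^3*(r s)^6*(r' s)^3*(τ s)^4 + (Real.sin u)^3*(r s)^8*(r' s)*(τ s)^6 + (-2)*(Real.sin u)^3*(Real.cos u)*(r s)^4*(r' s)^5*(τ s)^2 + (-4)*(Real.sin u)^3*(Real.cos u)*(r s)^6*(r' s)^3*(τ s)^4 + (-2)*(Real.sin u)^3*(Real.cos u)*(r s)^8*(r' s)*(τ s)^6 + (Real.sin u)^3*(Real.cos u)^2*(r s)^4*(r' s)^5*(τ s)^2 + (2)*(Real.sin u)^3*(Real.cos u)^2*(r s)^6*(r' s)^3*(τ s)^4 + (Real.sin u)^3*(Real.cos u)^2*(r s)^8*(r' s)*(τ s)^6 + (Real.sin u)^4*(r s)^4*(r' s)^6*(τ s)^2 + (2)*(Real.sin u)^4*(r s)^6*(r' s)^4*(τ s)^4 + (Real.sin u)^4*(r s)^8*(r' s)^2*(τ s)^6 + (-1)*(Real.sin u)^4*(Real.cos u)*(r s)^4*(r' s)^6*(τ s)^2 + (-2)*(Real.sin u)^4*(Real.cos u)*(r s)^6*(r' s)^4*(τ s)^4 + (-1)*(Real.sin u)^4*(Real.cos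 u)*(r s)^8*(r' s)^2*(τ s)^6) * Real.sin_sq_add_cos_sq u + ((-1)*(r s)^4*(r' s)^4*(τ s)^2 + (-2)*(r s)^6*(r' s)^2*(τ s)^4 + (-1)*(r s)^8*(τ s)^6 + (3)*(Real.cos u)*(r s)^4*(r' s)^4*(τ s)^2 + (6)*(Real.cos u)*(r s)^6*(r' s)^2*(τ s)^4 + (3)*(Real.cos u)*(r s)^8*(τ s)^6 + (-3)*(Real.cos u)^2*(r s)^4*(r' s)^4*(τ s)^2 + (-6)*(Real.cos u)^2*(r s)^6*(r' s)^2*(τ s)^4 + (-3)*(Real.cos u)^2*(r s)^8*(τ s)^6 + (Real.cos u)^3*(r s)^4*(r' s)^4*(τ s)^2 + (2)*(Real.cos u)^3*(r s)^6*(r' s)^2*(τ s)^4 + (Real.cos u)^3*(r s)^8*(τ s)^6 + (-1)*(Real.sin u)*(r s)^4*(r' s)^5*(τ s)^2 + (-2)*(Real.sin u)*(r s)^6*(r' s)^3*(τ s)^4 + (-1)*(Real.sin u)*(r s)^8*(r' s)*(τ s)^6 + (3)*(Real.sin u)*(Real.cos u)*(r s)^4*(r' s)^5*(τ s)^2 +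 (6)*(Real.sin u)*(Real.cos u)*(r s)^6*(r' s)^3*(τ s)^4 + (3)*(Real.sin u)*(Real.cos u)*(r s)^8*(r' s)*(τ s)^6 + (-3)*(Real.sin u)*(Real.cos u)^2*(r s)^4*(r' s)^5*(τ s)^2 + (-6)*(Real.sin u)*(Real.cos u)^2*(r s)^6*(r' s)^3*(τ s)^4 + (-3)*(Real.sin u)*(Real.cos u)^2*(r s)^8*(r' s)*(τ s)^6 + (Real.sin u)*(Real.cos u)^3*(r s)^4*(r' s)^5*(τ s)^2 + (2)*(Real.sin u)*(Real.cos u)^3*(r s)^6*(r' s)^3*(τ s)^4 + (Real.sin u)*(Real.cos u)^3*(r s)^8*(r' s)*(τ s)^6) * hrκ s
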